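/- For a monoid H, the following are equivalent: (a) H is trivial (i.e., H = {1_H}); (b) the finitary power monoid P_fin(H) is cancellative; (c) the restricted finitary power monoid P_{fin,×}(H) is cancellative; (d) the reduced finitary power monoid P_{fin,1}(H) is cancellative. -/
import Mathlib


open scoped Pointwise

/-- Two-sided divisibility in a monoid: `x` divides `y` if `y = u * x * v` for some `u, v`. -/
def DvdTS {M : Type*} [Monoid M] (x y : M) : Prop := ∃ u v : M, y = u * x * v

/-- A unit-divisor is a divisor of the identity. -/
def IsUnitDivisor {M : Type*} [Monoid M] (x : M) : Prop := DvdTS x 1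

/-- `x` is a proper divisor of `y` if `x` divides `y` but `y` does not divide `x`. -/
def IsProperDivisorTS {M : Type*} [Monoid M] (x y : M) : Prop := DvdTS x y ∧ ¬ DvdTS y x

/-- An atom is a non-unit that is not a product of two non-units. -/
def IsAtomTS {M : Type*} [Monoid M] (a : M) : Prop :=
  ¬ IsUnit a ∧ ∀ b c : M, a = b * c → IsUnit b ∨ IsUnit c

/-- A quark is a non-unit-divisor all of whose proper divisors are unit-divisors. -/
def IsQuarkTS {M : Type*} [Monoid M] (a : M) : Prop :=
  ¬ IsUnitDivisor a ∧ ∀ b : M, IsProperDivisorTS b a → IsUnitDivisor b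

/-- An irreducible is a non-unit-divisor with no factorization `a = b * c` into proper
divisors that are not unit-divisors. -/
def IsIrredTS {M : Type*} [Monoid M] (a : M) : Prop :=
  ¬ IsUnitDivisor a ∧
    ¬ ∃ b c : M, a = b * c ∧ IsProperDivisorTS b a ∧ IsProperDivisorTS c a ∧
      ¬ IsUnitDivisor b ∧ ¬ IsUnitDivisor c

def DedekindFiniteM (M : Type*) [Monoid M] : Prop := ∀ x y : M, x * y = 1 → y * x = 1

/-- ACC on principal two-sided ideals: no infinite sequence of consecutive proper divisors. -/
def ACCPrincipalTS (M : Type*) [Monoid M] : Prop :=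
  ¬ ∃ f : ℕ → M, ∀ n : ℕ, IsProperDivisorTS (f (n + 1)) (f n)

/-- Factorable: every non-unit-divisor is a (non-empty) product of irreducibles. -/
def FactorableM (M : Type*) [Monoid M] : Prop :=
  ∀ x : M, ¬ IsUnitDivisor x →
    ∃ l : List M, l ≠ [] ∧ (∀ a ∈ l, IsIrredTS a) ∧ l.prod = x

/-- Atomic: every non-unit-divisor is a (non-empty) product of atoms. -/
def AtomicM (M : Type*) [Monoid M] : Prop :=
  ∀ x : M, ¬ IsUnitDivisor x →
    ∃ l : List M, l ≠ [] ∧ (∀ a ∈ l, IsAtomTS a) ∧ l.prod = x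

/-- The finitary power monoid: non-empty finite subsets of `H` under setwise multiplication. -/
def PfinM (H : Type*) [Monoid H] : Submonoid (Set H) where
  carrier := {X : Set H | X.Finite ∧ X.Nonempty}
  mul_mem' := fun hX hY => ⟨hX.1.mul hY.1, hX.2.mul hY.2⟩
  one_mem' := ⟨Set.finite_one, 1, Set.mem_one.mpr rfl⟩

/-- The restricted finitary power monoid: non-empty finite subsets of `H` containing a unit. -/
def PfinTimes (H : Type*) [Monoid H] : Submonoid (Set H) where
  carrier := {X : Set H | X.Finite ∧ ∃ u ∈ X, IsUnit u}
  mul_mem' := by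
    rintro X Y ⟨hXf, u, hu, hu'⟩ ⟨hYf, v, hv, hv'⟩
    exact ⟨hXf.mul hYf, u * v, Set.mul_mem_mul hu hv, hu'.mul hv'⟩
  one_mem' := ⟨Set.finite_one, 1, Set.mem_one.mpr rfl, isUnit_one⟩

/-- The reduced finitary power monoid: finite subsets of `H` containing `1`. -/
def PfinOne (H : Type*) [Monoid H] : Submonoid (Set H) where
  carrier := {X : Set H | X.Finite ∧ (1 : H) ∈ X}
  mul_mem' := by
    rintro X Y ⟨hXf, hX1⟩ ⟨hYf, hY1⟩
    exact ⟨hXf.mul hYf, by simpa using Set.mul_mem_mul hX1 hY1⟩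
  one_mem' := ⟨Set.finite_one, Set.mem_one.mpr rfl⟩

lemma mem_PfinM {H : Type*} [Monoid H] {X : Set H} :
    X ∈ PfinM H ↔ X.Finite ∧ X.Nonempty := Iff.rfl

lemma mem_PfinTimes {H : Type*} [Monoid H] {X : Set H} :
    X ∈ PfinTimes H ↔ X.Finite ∧ ∃ u ∈ X, IsUnit u := Iff.rfl

lemma mem_PfinOne {H : Type*} [Monoid H] {X : Set H} :
    X ∈ PfinOne H ↔ X.Finite ∧ (1 : H) ∈ X := Iff.rfl

/-- Acyclic: `u * x * v ≠ x` whenever `u` or `v` is a non-unit. -/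
def AcyclicM (M : Type*) [Monoid M] : Prop :=
  ∀ u v x : M, (¬ IsUnit u ∨ ¬ IsUnit v) → u * x * v ≠ x

/-- Unit-cancellative: `x * y ≠ x ≠ y * x` whenever `y` is a non-unit. -/
def UnitCancellativeM (M : Type*) [Monoid M] : Prop :=
  ∀ x y : M, ¬ IsUnit y → x * y ≠ x ∧ y * x ≠ x

/-- Strongly unit-cancellative: `x * y ≠ x ≠ y * x` whenever `y ≠ 1`. -/
def StrongUnitCancellativeM (M : Type*) [Monoid M] : Prop :=
  ∀ x y : M, y ≠ 1 → x * y ≠ x ∧ y * x ≠ x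

/-- Torsion-free: the identity is the only element with finitely many powers. -/
def TorsionFreeM (M : Type*) [Monoid M] : Prop :=
  ∀ x : M, (Set.range fun k : ℕ => x ^ k).Finite → x = 1

/-- Cancellative monoid. -/
def CancellativeM (M : Type*) [Monoid M] : Prop :=
  ∀ a x y : M, (a * x = a * y → x = y) ∧ (x * a = y * a → x = y)

/-- The set of lengths of (irreducible) factorizations of `x`, with the conventions
`L(1) = {0}` and `L(u) = ∅` for a unit-divisor `u ≠ 1`. -/
def LengthSet {M : Type*} [Monoid M] (x : M) : Set ℕ :=
  {n | (x = 1 ∧ n = 0) ∨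
    (¬ IsUnitDivisor x ∧
      ∃ l : List M, l.length = n ∧ l ≠ [] ∧ (∀ a ∈ l, IsIrredTS a) ∧ l.prod = x)}

/-- The system of lengths: the family of non-empty length sets. -/
def SystemOfLengths (M : Type*) [Monoid M] : Set (Set ℕ) :=
  {L | L.Nonempty ∧ ∃ x : M, LengthSet x = L}


lemma aux_mul_eq' {H : Type*} [Monoid H] (x : H) :
    ({1, x} : Set H) * {1, x*x} = ({1, x} : Set H) * {1, x, x*x} := by
  ext y
  simp only [Set.mem_mul, Set.mem_insert_iff, Set.mem_singleton_iff,
    exists_eq_or_imp, exists_eq_left, one_mul, mul_one]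
  tauto

lemma aux_idem' {H : Type*} [Monoid H] (x : H) (e : x * x = x) :
    ({1, x} : Set H) * {1, x} = ({1, x} : Set H) := by
  ext y
  simp only [Set.mem_mul, Set.mem_insert_iff, Set.mem_singleton_iff,
    exists_eq_or_imp, exists_eq_left, one_mul, mul_one, e]
  tauto

lemma cancel_imp_trivial' {H : Type*} [Monoid H] {S : Submonoid (Set H)}
    (hA : ∀ x : H, ({1, x} : Set H) ∈ S) (hB : ∀ x : H, ({1, x, x*x} : Set H) ∈ S)
    (hc : CancellativeM S) : ∀ x : H, x = 1 := by
  intro x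
  set A : S := ⟨{1, x}, hA x⟩
  set B : S := ⟨{1, x*x}, hA (x*x)⟩
  set C : S := ⟨{1, x, x*x}, hB x⟩
  have hBC : B = C := (hc A B C).1 (Subtype.ext (by
    show ({1, x} : Set H) * {1, x*x} = ({1, x} : Set H) * {1, x, x*x}
    exact aux_mul_eq' x))
  have hset : ({1, x*x} : Set H) = {1, x, x*x} := congrArg Subtype.val hBC
  have hx : x ∈ ({1, x*x} : Set H) := by rw [hset]; exact Or.inr (Or.inl rfl)
  rcases hx with h1 | hxx
  · exact h1
  · have e : x * x = x := hxx.symm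
    have hA1 : A = 1 := (hc A A 1).1 (Subtype.ext (by
      show ({1, x} : Set H) * {1, x} = ({1, x} : Set H) * (1 : Set H)
      rw [mul_one]; exact aux_idem' x e))
    have hset2 : ({1, x} : Set H) = ((1 : S) : Set H) := congrArg Subtype.val hA1
    have : x ∈ ((1 : S) : Set H) := by rw [← hset2]; exact Or.inr rfl
    simpa using this

lemma trivial_imp_cancel' {H : Type*} [Monoid H] {S : Submonoid (Set H)}
    (h : ∀ x : H, x = 1) (hne : ∀ X : S, (X : Set H).Nonempty) :
    CancellativeM S := by
  have key : ∀ X : S, X = 1 := by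
    intro X
    apply Subtype.ext
    obtain ⟨a, ha⟩ := hne X
    ext y
    simp only [Submonoid.coe_one, Set.mem_one]
    exact ⟨fun _ => h y, fun hy => by rw [hy, ← h a]; exact ha⟩
  intro a u v
  constructor <;> intro _ <;> rw [key u, key v]

lemma mem_fin2 {H : Type*} [Monoid H] (x : H) : ({1, x} : Set H).Finite :=
  (Set.finite_singleton _).insert _

lemma mem_fin3 {H : Type*} [Monoid H] (x : H) : ({1, x, x*x} : Set H).Finite :=
  ((Set.finite_singleton _).insert _).insert _

/-- `H` is trivial iff `P_fin(H)` is cancellative iff `P_{fin,×}(H)` is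
cancellative iff `P_{fin,1}(H)` is cancellative. -/
theorem cancellativity_of_power_monoids (H : Type*) [Monoid H] :
    ((∀ x : H, x = 1) ↔ CancellativeM (PfinM H)) ∧
    ((∀ x : H, x = 1) ↔ CancellativeM (PfinTimes H)) ∧
    ((∀ x : H, x = 1) ↔ CancellativeM (PfinOne H)) := by
  refine ⟨⟨fun h => trivial_imp_cancel' h (fun X => X.prop.2), fun hc =>
      cancel_imp_trivial' (fun x => mem_PfinM.mpr ⟨mem_fin2 x, 1, Or.inl rfl⟩)
        (fun x => mem_PfinM.mpr ⟨mem_fin3 x, 1, Or.inl rfl⟩) hc⟩,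
    ⟨fun h => trivial_imp_cancel' h (fun X => by
        obtain ⟨u, hu, _⟩ := X.prop.2; exact ⟨u, hu⟩), fun hc =>
      cancel_imp_trivial' (fun x => mem_PfinTimes.mpr ⟨mem_fin2 x, 1, Or.inl rfl, isUnit_one⟩)
        (fun x => mem_PfinTimes.mpr ⟨mem_fin3 x, 1, Or.inl rfl, isUnit_one⟩) hc⟩,
    ⟨fun h => trivial_imp_cancel' h (fun X => ⟨1, X.prop.2⟩), fun hc =>
      cancel_imp_trivial' (fun x => mem_PfinOne.mpr ⟨mem_fin2 x, Or.inl rfl⟩)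
        (fun x => mem_PfinOne.mpr ⟨mem_fin3 x, Or.inl rfl⟩) hc⟩⟩
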